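/- Let α be a unit of O and let (F_n)_{n≥0} be a sequence of polynomials in K[T] with deg F_n < p^n for every n. Assume: (1) there exists an integer t ≥ 0 such that ϖ^t·F_n ∈ O[T] for all n ≥ 0 (so the μ-invariants of the nonzero F_n are bounded below by −t); and (2) F_n − α^{-1}·ν_n·F_{n-1} ∈ O[T] for all n ≥ 1. If there exists an integer m with F_m ≠ 0 and μ(F_m) < 0, then for every n ≥ 0 one has F_n ≠ 0, μ(F_n) = μ(F_0) < 0, and λ(F_n) = p^n − 1. -/
import Mathlib


open Polynomial

/-- The axioms of the normalized additive valuation `ord_ϖ : K → ℤ` of a discrete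
valuation ring `O` with uniformizer `ϖ` and fraction field `K`, recorded on the
nonzero elements of `K`: multiplicativity and the ultrametric inequality. -/
def IsOrd {K : Type*} [Field K] (v : K → ℤ) : Prop :=
  (∀ x y : K, x ≠ 0 → y ≠ 0 → v (x * y) = v x + v y) ∧
  (∀ x y : K, x ≠ 0 → y ≠ 0 → x + y ≠ 0 → min (v x) (v y) ≤ v (x + y))

/-- The μ-invariant of a (nonzero) polynomial `F = Σ aᵢ Tⁱ` over `K`:
`μ(F) = minᵢ ord_ϖ(aᵢ)`. -/
noncomputable def muInv {K : Type*} [Field K] (v : K → ℤ) (F : Polynomial K) : ℤ :=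
  sInf {m : ℤ | ∃ i, F.coeff i ≠ 0 ∧ v (F.coeff i) = m}

/-- The λ-invariant of a (nonzero) polynomial over `K`:
`λ(F) = min { i : ord_ϖ(aᵢ) = μ(F) }`. -/
noncomputable def lamInv {K : Type*} [Field K] (v : K → ℤ) (F : Polynomial K) : ℕ :=
  sInf {i : ℕ | F.coeff i ≠ 0 ∧ v (F.coeff i) = muInv v F}

/-- `F ∈ O[T]`: all coefficients lie in the valuation ring, i.e. have valuation `≥ 0`. -/
def IntegralPoly {K : Type*} [Field K] (v : K → ℤ) (F : Polynomial K) : Prop :=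
  ∀ i, F.coeff i ≠ 0 → 0 ≤ v (F.coeff i)

/-- The residue field `O/(ϖ)` has characteristic `p`, i.e. `p` lies in the maximal
ideal `(ϖ)` of `O` (equivalently `ord_ϖ(p) ≥ 1`, or `p = 0` in `K`). -/
def ResidueCharP {K : Type*} [Field K] (v : K → ℤ) (p : ℕ) : Prop :=
  (p : K) = 0 ∨ 1 ≤ v (p : K)

/-- `ν_n(T) = Σ_{k=0}^{p-1} (1+T)^{k·p^(n-1)}`, the polynomial representing the
corestriction map `cor_{n-1}^n : K[G_{n-1}] → K[G_n]`. -/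
noncomputable def nuPoly (K : Type*) [Field K] (p n : ℕ) : Polynomial K :=
  ∑ k ∈ Finset.range p, (1 + Polynomial.X) ^ (k * p ^ (n - 1))

section Aux

variable {K : Type*} [Field K] {v : K → ℤ}

/-- `x = 0` or `v x ≥ s`. -/
def Vge (v : K → ℤ) (s : ℤ) (x : K) : Prop := x ≠ 0 → s ≤ v x

lemma Vge.mono {s t : ℤ} (h : s ≤ t) {x : K} (hx : Vge v t x) : Vge v s x :=
  fun h0 => le_trans h (hx h0)

lemma isOrd_one (hv : IsOrd v) : v 1 = 0 := by
  have := hv.1 1 1 one_ne_zero one_ne_zero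
  simp at this; omega

lemma isOrd_neg (hv : IsOrd v) {x : K} (hx : x ≠ 0) : v (-x) = v x := by
  by_cases h2 : (-1 : K) = 1
  · have hx2 : -x = x := by
      have := congrArg (· * x) h2
      simpa using this
    rw [hx2]
  · have hm1 : (-1 : K) ≠ 0 := by simp
    have h := hv.1 (-1) (-1) hm1 hm1
    simp at h
    rw [isOrd_one hv] at h
    have h1 : v (-1 : K) = 0 := by omega
    have := hv.1 (-1) x hm1 hx
    rw [h1] at this; simpa using this

lemma isOrd_inv (hv : IsOrd v) {x : K} (hx : x ≠ 0) : v x⁻¹ = - v x := by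
  have := hv.1 x x⁻¹ hx (inv_ne_zero hx)
  rw [mul_inv_cancel₀ hx, isOrd_one hv] at this
  omega

lemma vge_add (hv : IsOrd v) {s : ℤ} {x y : K} (hx : Vge v s x) (hy : Vge v s y) :
    Vge v s (x + y) := by
  intro h0
  by_cases h1 : x = 0
  · simpa [h1] using hy (by simpa [h1] using h0)
  by_cases h2 : y = 0
  · simpa [h2] using hx (by simpa [h2] using h0)
  exact le_trans (le_min (hx h1) (hy h2)) (hv.2 x y h1 h2 h0)

lemma vge_mul (hv : IsOrd v) {s t : ℤ} {x y : K} (hx : Vge v s x) (hy : Vge v t y) :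
    Vge v (s + t) (x * y) := by
  intro h0
  have h1 : x ≠ 0 := fun h => h0 (by simp [h])
  have h2 : y ≠ 0 := fun h => h0 (by simp [h])
  rw [hv.1 x y h1 h2]
  exact add_le_add (hx h1) (hy h2)

lemma vge_sum (hv : IsOrd v) {s : ℤ} {ι : Type*} (t : Finset ι) (f : ι → K)
    (h : ∀ i ∈ t, Vge v s (f i)) : Vge v s (∑ i ∈ t, f i) := by
  classical
  induction t using Finset.cons_induction with
  | empty => intro h0; simp at h0
  | cons a u ha ih =>
    rw [Finset.sum_cons]
    exact vge_add hv (h a (by simp)) (ih fun i hi => h i (Finset.mem_cons_of_mem hi))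

/-- If `a ≠ 0` with `v a = s` and `b` is zero-or-valuation `≥ s+1`, then
`a + b ≠ 0` and `v (a+b) = s`. -/
lemma vadd_exact (hv : IsOrd v) {s : ℤ} {a b : K} (ha : a ≠ 0) (hva : v a = s)
    (hb : Vge v (s + 1) b) : a + b ≠ 0 ∧ v (a + b) = s := by
  by_cases h0 : b = 0
  · simp [h0, ha, hva]
  have hvb : s + 1 ≤ v b := hb h0
  have hne : a + b ≠ 0 := by
    intro h
    have : b = -a := by linear_combination h
    rw [this, isOrd_neg hv ha, hva] at hvb; omega
  refine ⟨hne, le_antisymm ?_ ?_⟩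
  · -- v (a+b) ≤ s : a = (a+b) + (-b)
    have h := hv.2 (a + b) (-b) hne (neg_ne_zero.mpr h0) (by simpa using ha)
    rw [show a + b + -b = a by ring, hva, isOrd_neg hv h0] at h
    omega
  · have h := hv.2 a b ha h0 hne
    omega

/-- Integer casts have nonnegative valuation. -/
lemma isOrd_natCast (hv : IsOrd v) (m : ℕ) (h : (m : K) ≠ 0) : 0 ≤ v (m : K) := by
  induction m with
  | zero => simp at h
  | succ n ih =>
    by_cases hn : (n : K) = 0
    · have : ((n + 1 : ℕ) : K) = 1 := by push_cast [hn]; ring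
      rw [this, isOrd_one hv]
    · have h' : (n : K) + 1 ≠ 0 := by push_cast at h; exact h
      have hle := hv.2 (n : K) 1 hn one_ne_zero h'
      have h2 := ih hn
      rw [isOrd_one hv] at hle
      have : ((n + 1 : ℕ) : K) = (n : K) + 1 := by push_cast; ring
      rw [this]
      omega

lemma isOrd_intCast (hv : IsOrd v) (m : ℤ) (h : (m : K) ≠ 0) : 0 ≤ v (m : K) := by
  obtain ⟨n, rfl | rfl⟩ := m.eq_nat_or_neg
  · have e : ((n : ℤ) : K) = (n : K) := by push_cast; ring
    rw [e] at h ⊢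
    exact isOrd_natCast hv n h
  · push_cast at h ⊢
    rw [isOrd_neg hv (by simpa using h)]
    exact isOrd_natCast hv n (by simpa using h)

/-- `F` has all coefficients zero-or-valuation `≥ s`. -/
def VB (v : K → ℤ) (s : ℤ) (F : Polynomial K) : Prop := ∀ i, Vge v s (F.coeff i)

lemma VB_mul (hv : IsOrd v) {s t : ℤ} {F G : Polynomial K} (hF : VB v s F) (hG : VB v t G) :
    VB v (s + t) (F * G) := by
  intro i
  rw [Polynomial.coeff_mul]
  exact vge_sum hv _ _ fun x _ => vge_mul hv (hF x.1) (hG x.2)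

lemma VB_add (hv : IsOrd v) {s : ℤ} {F G : Polynomial K} (hF : VB v s F) (hG : VB v s G) :
    VB v s (F + G) := fun i => by
  rw [Polynomial.coeff_add]; exact vge_add hv (hF i) (hG i)

lemma muInv_set_eq (v : K → ℤ) (F : Polynomial K) :
    {m : ℤ | ∃ i, F.coeff i ≠ 0 ∧ v (F.coeff i) = m}
      = (fun i => v (F.coeff i)) '' (F.support : Set ℕ) := by
  ext m
  simp only [Set.mem_setOf_eq, Set.mem_image, Finset.mem_coe, Polynomial.mem_support_iff]

lemma muInv_spec {F : Polynomial K} (hF : F ≠ 0) :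
    (∃ i, F.coeff i ≠ 0 ∧ v (F.coeff i) = muInv v F) ∧
      ∀ i, F.coeff i ≠ 0 → muInv v F ≤ v (F.coeff i) := by
  have hfin : {m : ℤ | ∃ i, F.coeff i ≠ 0 ∧ v (F.coeff i) = m}.Finite := by
    rw [muInv_set_eq]; exact (F.support.finite_toSet).image _
  have hne : {m : ℤ | ∃ i, F.coeff i ≠ 0 ∧ v (F.coeff i) = m}.Nonempty := by
    obtain ⟨i, hi⟩ := Polynomial.support_nonempty.mpr hF
    rw [Polynomial.mem_support_iff] at hi
    exact ⟨v (F.coeff i), i, hi, rfl⟩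
  constructor
  · exact hne.csInf_mem hfin
  · intro i hi
    exact csInf_le hfin.bddBelow ⟨i, hi, rfl⟩

lemma lamInv_spec {F : Polynomial K} (hF : F ≠ 0) :
    (F.coeff (lamInv v F) ≠ 0 ∧ v (F.coeff (lamInv v F)) = muInv v F) ∧
      ∀ i, F.coeff i ≠ 0 → v (F.coeff i) = muInv v F → lamInv v F ≤ i := by
  obtain ⟨⟨i, hi⟩, _⟩ := muInv_spec (v := v) hF
  constructor
  · exact Nat.sInf_mem (s := {j : ℕ | F.coeff j ≠ 0 ∧ v (F.coeff j) = muInv v F}) ⟨i, hi⟩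
  · intro j h1 h2
    exact Nat.sInf_le (s := {j : ℕ | F.coeff j ≠ 0 ∧ v (F.coeff j) = muInv v F}) ⟨h1, h2⟩

end Aux

noncomputable def nuZ (p n : ℕ) : Polynomial ℤ :=
  ∑ k ∈ Finset.range p, (1 + Polynomial.X) ^ (k * p ^ (n - 1))

lemma nuZ_map {R : Type*} [CommRing R] (f : ℤ →+* R) (p n : ℕ) :
    (nuZ p n).map f = ∑ k ∈ Finset.range p, (1 + Polynomial.X) ^ (k * p ^ (n - 1)) := by
  simp [nuZ, Polynomial.map_sum, Polynomial.map_pow, Polynomial.map_add]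

lemma nuZ_mod (p n : ℕ) (hp : p.Prime) :
    (nuZ p n).map (Int.castRingHom (ZMod p)) =
      Polynomial.X ^ (p ^ (n - 1) * (p - 1)) := by
  haveI : Fact p.Prime := ⟨hp⟩
  set q := p ^ (n - 1)
  rw [nuZ_map]
  have frob : (1 + (Polynomial.X : Polynomial (ZMod p))) ^ q = 1 + Polynomial.X ^ q := by
    simpa using add_pow_char_pow (1 : Polynomial (ZMod p)) Polynomial.X p (n - 1)
  have key : (∑ k ∈ Finset.range p, (1 + (Polynomial.X : Polynomial (ZMod p))) ^ (k * q))
      = ∑ k ∈ Finset.range p, (1 + Polynomial.X ^ q) ^ k := by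
    refine Finset.sum_congr rfl fun k _ => ?_
    rw [mul_comm, pow_mul, frob]
  rw [key]
  have hXq : (Polynomial.X : Polynomial (ZMod p)) ^ q ≠ 0 := pow_ne_zero _ Polynomial.X_ne_zero
  apply mul_right_cancel₀ hXq
  have gs := geom_sum_mul (1 + (Polynomial.X : Polynomial (ZMod p)) ^ q) p
  rw [add_sub_cancel_left] at gs
  rw [gs]
  have frob2 : (1 + (Polynomial.X : Polynomial (ZMod p)) ^ q) ^ p = 1 + (Polynomial.X ^ q) ^ p := by
    simpa using add_pow_char (1 : Polynomial (ZMod p)) (Polynomial.X ^ q) p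
  rw [frob2, add_sub_cancel_left, ← pow_mul, ← pow_add]
  have hq : q * p = q * (p - 1) + q := by
    conv_lhs => rw [← Nat.sub_add_cancel hp.one_le]
    ring
  rw [hq]

section NuK

variable {K : Type*} [Field K] {v : K → ℤ}

lemma nuPoly_eq_map (K : Type*) [Field K] (p n : ℕ) :
    nuPoly K p n = (nuZ p n).map (Int.castRingHom K) := (nuZ_map _ p n).symm

lemma VB_mono {s t : ℤ} (h : s ≤ t) {F : Polynomial K} (hF : VB v t F) : VB v s F :=
  fun i => (hF i).mono h

lemma nuPoly_VB0 (hv : IsOrd v) (p n : ℕ) : VB v 0 (nuPoly K p n) := by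
  intro i h0
  rw [nuPoly_eq_map, Polynomial.coeff_map] at h0 ⊢
  exact isOrd_intCast hv _ h0

lemma VB_C_inv (hv : IsOrd v) {α : K} (hα0 : α ≠ 0) (hα : v α = 0) :
    VB v 0 (Polynomial.C α⁻¹) := by
  have hvαinv : v α⁻¹ = 0 := by rw [isOrd_inv hv hα0, hα, neg_zero]
  intro i
  rw [Polynomial.coeff_C]
  split
  · intro _; rw [hvαinv]
  · intro h0; exact absurd rfl h0

lemma nu_decomp (p n : ℕ) (hp : p.Prime) (hv : IsOrd v) (hres : ResidueCharP v p) :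
    ∃ D : Polynomial K,
      nuPoly K p n = Polynomial.X ^ (p ^ (n - 1) * (p - 1)) + D ∧ VB v 1 D := by
  set d := p ^ (n - 1) * (p - 1) with hd
  refine ⟨(nuZ p n - Polynomial.X ^ d).map (Int.castRingHom K), ?_, ?_⟩
  · rw [nuPoly_eq_map, Polynomial.map_sub, Polynomial.map_pow, Polynomial.map_X]; ring
  · intro i h0
    have hdvd : (p : ℤ) ∣ (nuZ p n - Polynomial.X ^ d).coeff i := by
      have h2 : ((nuZ p n - Polynomial.X ^ d).map (Int.castRingHom (ZMod p))) = 0 := by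
        rw [Polynomial.map_sub, Polynomial.map_pow, Polynomial.map_X, nuZ_mod p n hp]; ring
      have h3 := congrArg (fun g => Polynomial.coeff g i) h2
      simp only [Polynomial.coeff_map, Polynomial.coeff_zero] at h3
      exact (ZMod.intCast_zmod_eq_zero_iff_dvd _ p).mp (by exact_mod_cast h3)
    obtain ⟨c, hc⟩ := hdvd
    have hco : ((nuZ p n - Polynomial.X ^ d).map (Int.castRingHom K)).coeff i
        = (p : K) * (c : K) := by
      rw [Polynomial.coeff_map, hc]
      simp only [eq_intCast, Int.cast_mul, Int.cast_natCast]
    rw [hco] at h0 ⊢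
    rcases hres with h | h
    · exact absurd (by rw [h, zero_mul]) h0
    · have hp0 : (p : K) ≠ 0 := fun hx => h0 (by rw [hx, zero_mul])
      have hc0 : (c : K) ≠ 0 := fun hx => h0 (by rw [hx, mul_zero])
      rw [hv.1 _ _ hp0 hc0]
      have := isOrd_intCast hv c hc0
      omega

lemma step_lemma (p n : ℕ) (hp : p.Prime) (hv : IsOrd v) (hres : ResidueCharP v p)
    {α : K} (hα0 : α ≠ 0) (hα : v α = 0)
    {G A H : Polynomial K}
    (hH : H = Polynomial.C α⁻¹ * nuPoly K p n * G + A) (hA : IntegralPoly v A)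
    (hG : G ≠ 0) (hμ : muInv v G < 0) :
    H ≠ 0 ∧ muInv v H = muInv v G ∧
      lamInv v H = p ^ (n - 1) * (p - 1) + lamInv v G := by
  obtain ⟨D, hD, hDV⟩ := nu_decomp (v := v) p n hp hv hres
  set d := p ^ (n - 1) * (p - 1) with hd
  set μ := muInv v G with hμdef
  set l := lamInv v G with hldef
  have hαinv : α⁻¹ ≠ 0 := inv_ne_zero hα0
  have hvαinv : v α⁻¹ = 0 := by rw [isOrd_inv hv hα0, hα, neg_zero]
  have hGV : VB v μ G := fun i h0 => (muInv_spec hG).2 i h0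
  have hCV : VB v 0 (Polynomial.C α⁻¹) := VB_C_inv hv hα0 hα
  have hA' : VB v 0 A := hA
  set B := Polynomial.C α⁻¹ * D * G + A with hBdef
  have hBV : VB v (μ + 1) B := by
    have h1 := VB_mul hv (VB_mul hv hCV hDV) hGV
    exact VB_add hv (VB_mono (by omega) h1) (VB_mono (by omega) hA')
  have hHeq : H = Polynomial.C α⁻¹ * (G * Polynomial.X ^ d) + B := by
    rw [hH, hD, hBdef]; ring
  have hHc : ∀ i, H.coeff i = α⁻¹ * (G * Polynomial.X ^ d).coeff i + B.coeff i := by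
    intro i
    rw [hHeq, Polynomial.coeff_add, Polynomial.coeff_C_mul]
  -- lower bound on all coefficients
  have hVBH : VB v μ H := by
    intro i
    rw [hHc i]
    refine vge_add hv ?_ (Vge.mono (by omega) (hBV i))
    rw [Polynomial.coeff_mul_X_pow']
    split
    · have := vge_mul hv (fun _ => le_of_eq hvαinv.symm) (hGV (i - d))
      exact Vge.mono (by omega) this
    · intro h0; exact absurd (mul_zero _) h0
  -- the pivot coefficient
  have hGl := (lamInv_spec (v := v) hG).1
  have hpivot : H.coeff (d + l) ≠ 0 ∧ v (H.coeff (d + l)) = μ := by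
    have hcoeff : (G * Polynomial.X ^ d).coeff (d + l) = G.coeff l := by
      rw [Polynomial.coeff_mul_X_pow']
      simp
    have ha : α⁻¹ * G.coeff l ≠ 0 := mul_ne_zero hαinv hGl.1
    have hva : v (α⁻¹ * G.coeff l) = μ := by
      rw [hv.1 _ _ hαinv hGl.1, hvαinv, hGl.2]
      · ring
    have := vadd_exact hv ha hva (hBV (d + l))
    rw [hHc (d + l), hcoeff]
    exact this
  have hHne : H ≠ 0 := fun hz => hpivot.1 (by rw [hz, Polynomial.coeff_zero])
  have hmuH : muInv v H = μ := by
    refine le_antisymm ?_ ?_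
    · have := (muInv_spec (v := v) hHne).2 (d + l) hpivot.1
      omega
    · obtain ⟨i, h1, h2⟩ := (muInv_spec (v := v) hHne).1
      rw [← h2]
      exact hVBH i h1
  -- coefficients below the pivot are strictly larger
  have hlow : ∀ i, i < d + l → Vge v (μ + 1) (H.coeff i) := by
    intro i hi
    rw [hHc i]
    refine vge_add hv ?_ (hBV i)
    rw [Polynomial.coeff_mul_X_pow']
    split
    · rename_i hdi
      by_cases hgz : G.coeff (i - d) = 0
      · rw [hgz, mul_zero]; intro h0; exact absurd rfl h0
      · have hjl : i - d < l := by omega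
        have h1 : μ ≤ v (G.coeff (i - d)) := hGV _ hgz
        have h2 : v (G.coeff (i - d)) ≠ μ := by
          intro h
          exact absurd ((lamInv_spec (v := v) hG).2 _ hgz h) (by omega)
        have := vge_mul hv (fun _ => le_of_eq hvαinv.symm) (fun _ => h1)
        intro h0
        have h3 := hv.1 α⁻¹ (G.coeff (i - d)) hαinv hgz
        rw [hvαinv] at h3
        omega
    · intro h0; exact absurd (mul_zero _) h0
  refine ⟨hHne, hmuH, ?_⟩
  have hmem : (d + l) ∈ {i : ℕ | H.coeff i ≠ 0 ∧ v (H.coeff i) = muInv v H} := by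
    exact ⟨hpivot.1, by rw [hmuH, hpivot.2]⟩
  refine le_antisymm ?_ ?_
  · exact Nat.sInf_le hmem
  · refine le_csInf ⟨d + l, hmem⟩ ?_
    intro j hj
    by_contra hcon
    push_neg at hcon
    have := hlow j hcon hj.1
    rw [hj.2, hmuH] at this
    omega

lemma back_lemma (p n : ℕ) (hp : p.Prime) (hv : IsOrd v) (hres : ResidueCharP v p)
    {α : K} (hα0 : α ≠ 0) (hα : v α = 0)
    {G A H : Polynomial K}
    (hH : H = Polynomial.C α⁻¹ * nuPoly K p n * G + A) (hA : IntegralPoly v A)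
    (hHne : H ≠ 0) (hμH : muInv v H < 0) : G ≠ 0 ∧ muInv v G < 0 := by
  by_contra hcon
  push_neg at hcon
  have hGV : VB v 0 G := by
    by_cases hGz : G = 0
    · intro i h0
      rw [hGz, Polynomial.coeff_zero] at h0
      exact absurd rfl h0
    · have hge : 0 ≤ muInv v G := not_lt.mp (fun h => (hcon hGz).not_gt h)
      intro i h0
      exact le_trans hge ((muInv_spec hGz).2 i h0)
  have hHV : VB v 0 H := by
    rw [hH]
    have h1 := VB_mul hv (VB_mul hv (VB_C_inv hv hα0 hα) (nuPoly_VB0 hv p n)) hGV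
    exact VB_add hv (VB_mono (by omega) h1) hA
  obtain ⟨i, h1, h2⟩ := (muInv_spec (v := v) hHne).1
  have := hHV i h1
  omega

end NuK

/-- Theorem 3.4: if some Mazur–Tate element has negative μ-invariant, then all of
them do, the μ-invariants are constant, and the λ-invariants are maximal. -/
theorem maximality_of_lambda_invariants
    {K : Type*} [Field K] (p : ℕ) (hp : p.Prime)
    (v : K → ℤ) (hv : IsOrd v) (hres : ResidueCharP v p)
    (α : K) (hα0 : α ≠ 0) (hα : v α = 0)
    (F : ℕ → Polynomial K)
    (hdeg : ∀ n, (F n).degree < (p ^ n : ℕ))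
    -- (1): there is t ≥ 0 with ϖ^t·Fₙ ∈ O[T] for all n
    (ht : ∃ t : ℕ, ∀ n i, (F n).coeff i ≠ 0 → -(t : ℤ) ≤ v ((F n).coeff i))
    -- (2): Fₙ − α⁻¹·νₙ·Fₙ₋₁ ∈ O[T] for all n ≥ 1
    (hA : ∀ n, 1 ≤ n →
      IntegralPoly v (F n - Polynomial.C α⁻¹ * nuPoly K p n * F (n - 1)))
    (hm : ∃ m, F m ≠ 0 ∧ muInv v (F m) < 0) :
    muInv v (F 0) < 0 ∧
      ∀ n, F n ≠ 0 ∧ muInv v (F n) = muInv v (F 0) ∧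
        lamInv v (F n) = p ^ n - 1 := by
  obtain ⟨m, hm1, hm2⟩ := hm
  have hrec : ∀ n, 1 ≤ n → F n = Polynomial.C α⁻¹ * nuPoly K p n * F (n - 1)
      + (F n - Polynomial.C α⁻¹ * nuPoly K p n * F (n - 1)) := by
    intro n _; ring
  have down : ∀ n, F n ≠ 0 ∧ muInv v (F n) < 0 → F 0 ≠ 0 ∧ muInv v (F 0) < 0 := by
    intro n
    induction n with
    | zero => exact id
    | succ k ih =>
      intro h
      have hb := back_lemma p (k + 1) hp hv hres hα0 hα
        (hrec (k + 1) (by omega)) (hA (k + 1) (by omega)) h.1 h.2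
      exact ih (by simpa using hb)
  have h0 := down m ⟨hm1, hm2⟩
  have stepF : ∀ n, F n ≠ 0 ∧ muInv v (F n) < 0 →
      F (n + 1) ≠ 0 ∧ muInv v (F (n + 1)) = muInv v (F n) ∧
        lamInv v (F (n + 1)) = p ^ n * (p - 1) + lamInv v (F n) := by
    intro n h
    have hs := step_lemma p (n + 1) hp hv hres hα0 hα
      (hrec (n + 1) (by omega)) (hA (n + 1) (by omega))
      (by simpa using h.1) (by simpa using h.2)
    simpa using hs
  have fwd : ∀ n, F n ≠ 0 ∧ muInv v (F n) = muInv v (F 0) ∧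
      lamInv v (F n) = lamInv v (F 0) + (p ^ n - 1) := by
    intro n
    induction n with
    | zero => exact ⟨h0.1, rfl, by simp⟩
    | succ k ih =>
      have hk : F k ≠ 0 ∧ muInv v (F k) < 0 := ⟨ih.1, by rw [ih.2.1]; exact h0.2⟩
      obtain ⟨s1, s2, s3⟩ := stepF k hk
      refine ⟨s1, by rw [s2, ih.2.1], ?_⟩
      rw [s3, ih.2.2]
      have h1 : 1 ≤ p ^ k := Nat.one_le_pow _ _ hp.pos
      have h2 : p ^ (k + 1) = p ^ k * (p - 1) + p ^ k := by
        zify [hp.one_le]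
        ring
      omega
  have hF1 := (fwd 1).1
  have hlam1 := (fwd 1).2.2
  have hlt : lamInv v (F 1) < p ^ 1 := by
    have hmem := (lamInv_spec (v := v) hF1).1.1
    have hle : lamInv v (F 1) ≤ (F 1).natDegree := Polynomial.le_natDegree_of_ne_zero hmem
    have hdlt : (F 1).natDegree < p ^ 1 := (Polynomial.natDegree_lt_iff_degree_lt hF1).mpr (hdeg 1)
    omega
  have hp1 : 1 ≤ p ^ 1 := Nat.one_le_pow _ _ hp.pos
  have hlam0 : lamInv v (F 0) = 0 := by omega
  refine ⟨h0.2, fun n => ?_⟩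
  obtain ⟨f1, f2, f3⟩ := fwd n
  exact ⟨f1, f2, by rw [f3, hlam0, Nat.zero_add]⟩
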